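/- Let n > 1 and let r_1,…,r_n be generators of 𝕊. Then the set of z ∈ ℂ for which the vectors r_1(z),…,r_n(z) ∈ ℂⁿ (obtained by evaluating every entry at z) are linearly independent is infinite. -/

import Mathlib

open Polynomial

/-- The height of an `n`-dimensional vector polynomial `p = (P_1, ..., P_n)`:
`h(p) = max (n * deg P_j + j - 1)` over `1 <= j <= n`, taken in `Z union {-infty}`,
with `deg 0 = -infty` and `h(0) = -infty`.  (Entries are indexed by `j : Fin n`,
so `j.val` plays the role of `j - 1`.) -/
noncomputable def height (n : ℕ) (p : Fin n → ℂ[X]) : WithBot ℤ :=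
  Finset.univ.sup fun j => if p j = 0 then (⊥ : WithBot ℤ)
    else (((n * (p j).natDegree + j.val : ℕ) : ℤ) : WithBot ℤ)

/-- The solution set `S` of the interpolation problem: all vector polynomials
`p` such that the linear combination of the entries evaluated at the node `z j`
with coefficients `α j` vanishes, for every node `j`. -/
def Sol (n N : ℕ) (z : Fin N → ℂ) (α : Fin N → Fin n → ℂ) : Set (Fin n → ℂ[X]) :=
  {p | ∀ j : Fin N, ∑ k : Fin n, α j k * (p k).eval (z j) = 0}

/-- `M(r_1) + ... + M(r_(j-1))`: the set of combinations of scalar-polynomial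
multiples of the `r_l` with `l < j` (for `j = 0` this set is `{0}`). -/
def prevSet (n : ℕ) (r : Fin n → (Fin n → ℂ[X])) (j : Fin n) : Set (Fin n → ℂ[X]) :=
  {q | ∃ S : Fin n → ℂ[X], q = ∑ l ∈ Finset.univ.filter (fun l => l < j), S l • r l}

/-- `r_1, ..., r_n` are generators of the solution set `S`: each `r_j` belongs
to `S \ (M(r_1) + ... + M(r_(j-1)))` and has minimal height among the elements
of that set.  (For `j = 1` this says that `r_1` is a nonzero element of `S` of
minimal height.) -/
def IsGenerators (n N : ℕ) (z : Fin N → ℂ) (α : Fin N → Fin n → ℂ)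
    (r : Fin n → (Fin n → ℂ[X])) : Prop :=
  ∀ j : Fin n, r j ∈ Sol n N z α ∧ r j ∉ prevSet n r j ∧
    ∀ q ∈ Sol n N z α, q ∉ prevSet n r j → height n (r j) ≤ height n q

section aux

variable {n N : ℕ}

lemma residue_eq (hn : 0 < n) {a b : ℕ} {j k : Fin n}
    (h : n * a + j.val = n * b + k.val) : j = k ∧ a = b := by
  have hj : (n * a + j.val) % n = j.val := by
    rw [Nat.mul_add_mod]; exact Nat.mod_eq_of_lt j.isLt
  have hk : (n * b + k.val) % n = k.val := by
    rw [Nat.mul_add_mod]; exact Nat.mod_eq_of_lt k.isLt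
  have hjk : j = k := Fin.ext (by rw [← hj, h, hk])
  refine ⟨hjk, ?_⟩
  subst hjk
  exact Nat.eq_of_mul_eq_mul_left hn (Nat.add_right_cancel h)

lemma height_spec (hn : 0 < n) {p : Fin n → ℂ[X]} (hp : p ≠ 0) :
    ∃ k : Fin n, p k ≠ 0 ∧
      height n p = (((n * (p k).natDegree + k.val : ℕ) : ℤ) : WithBot ℤ) ∧
      ∀ j : Fin n, p j ≠ 0 →
        n * (p j).natDegree + j.val ≤ n * (p k).natDegree + k.val := by
  classical
  set f : Fin n → WithBot ℤ := fun j => if p j = 0 then (⊥ : WithBot ℤ)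
    else (((n * (p j).natDegree + j.val : ℕ) : ℤ) : WithBot ℤ) with hf
  have hne : (Finset.univ : Finset (Fin n)).Nonempty := ⟨⟨0, hn⟩, Finset.mem_univ _⟩
  obtain ⟨k, -, hk⟩ := Finset.exists_mem_eq_sup Finset.univ hne f
  obtain ⟨j0, hj0⟩ : ∃ j, p j ≠ 0 := by
    by_contra h; push_neg at h; exact hp (funext fun j => h j)
  have hle : ∀ j, f j ≤ f k := by
    intro j
    rw [← hk]
    exact Finset.le_sup (Finset.mem_univ j)
  have hpk : p k ≠ 0 := by
    intro h0
    have := hle j0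
    rw [hf] at this
    simp only [if_neg hj0, if_pos h0] at this
    exact (not_le.mpr (WithBot.bot_lt_coe _)) this
  refine ⟨k, hpk, ?_, ?_⟩
  · rw [height, ← hf, hk, hf]
    simp only [if_neg hpk]
  · intro j hj
    have := hle j
    rw [hf] at this
    simp only [if_neg hj, if_neg hpk] at this
    exact_mod_cast this


lemma sol_sub_smul {z : Fin N → ℂ} {α : Fin N → Fin n → ℂ} {p q : Fin n → ℂ[X]}
    (hp : p ∈ Sol n N z α) (hq : q ∈ Sol n N z α) (S : ℂ[X]) :
    p - S • q ∈ Sol n N z α := by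
  intro m
  have h1 := hp m
  have h2 := hq m
  have key : ∀ k : Fin n, α m k * ((p - S • q) k).eval (z m)
      = α m k * (p k).eval (z m) - S.eval (z m) * (α m k * (q k).eval (z m)) := by
    intro k
    simp only [Pi.sub_apply, Pi.smul_apply, smul_eq_mul, eval_sub, eval_mul]
    ring
  rw [Finset.sum_congr rfl (fun k _ => key k), Finset.sum_sub_distrib, h1,
    ← Finset.mul_sum, h2, mul_zero, sub_zero]

lemma zero_mem_prevSet (r : Fin n → Fin n → ℂ[X]) (j : Fin n) : (0 : Fin n → ℂ[X]) ∈ prevSet n r j :=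
  ⟨0, by simp⟩

lemma prevSet_mono {r : Fin n → Fin n → ℂ[X]} {i j : Fin n} (hij : i ≤ j) :
    prevSet n r i ⊆ prevSet n r j := by
  rintro q ⟨S, rfl⟩
  refine ⟨fun l => if l < i then S l else 0, ?_⟩
  rw [Finset.sum_filter, Finset.sum_filter]
  apply Finset.sum_congr rfl
  intro l _
  by_cases h : l < i
  · simp only [if_pos h, if_pos (lt_of_lt_of_le h hij)]
  · by_cases h2 : l < j
    · simp only [if_neg h, if_pos h2, zero_smul]
    · simp only [if_neg h, if_neg h2]

lemma prevSet_add_smul {r : Fin n → Fin n → ℂ[X]} {i j : Fin n} (hij : i < j)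
    {q : Fin n → ℂ[X]} (hq : q ∈ prevSet n r j) (S : ℂ[X]) :
    q + S • r i ∈ prevSet n r j := by
  classical
  obtain ⟨T, rfl⟩ := hq
  refine ⟨fun l => T l + if l = i then S else 0, ?_⟩
  have key : ∀ l : Fin n, (T l + if l = i then S else 0) • r l
      = T l • r l + (if l = i then S else 0) • r l := fun l => add_smul _ _ _
  rw [Finset.sum_congr rfl (fun l _ => key l), Finset.sum_add_distrib]
  congr 1
  rw [Finset.sum_eq_single i]
  · rw [if_pos rfl]
  · intro b _ hb; rw [if_neg hb, zero_smul]
  · intro h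
    exact absurd ((Finset.mem_filter.mpr ⟨Finset.mem_univ i, hij⟩ :
      i ∈ Finset.univ.filter (fun l => l < j))) h


variable {z : Fin N → ℂ} {α : Fin N → Fin n → ℂ} {r : Fin n → Fin n → ℂ[X]}

lemma gen_ne_zero (hr : IsGenerators n N z α r) (j : Fin n) : r j ≠ 0 :=
  fun h => (hr j).2.1 (h ▸ zero_mem_prevSet r j)

lemma height_mono (hr : IsGenerators n N z α r) {i j : Fin n} (hij : i ≤ j) :
    height n (r i) ≤ height n (r j) :=
  (hr i).2.2 (r j) (hr j).1 (fun h => (hr j).2.1 (prevSet_mono hij h))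

lemma lead_ne (hn : 0 < n) (hr : IsGenerators n N z α r) (k : Fin n → Fin n)
    (hk1 : ∀ j, r j (k j) ≠ 0)
    (hk2 : ∀ j, height n (r j)
      = (((n * (r j (k j)).natDegree + (k j).val : ℕ) : ℤ) : WithBot ℤ))
    (hk3 : ∀ j j', r j j' ≠ 0 →
      n * (r j j').natDegree + j'.val ≤ n * (r j (k j)).natDegree + (k j).val)
    {i j : Fin n} (hij : i < j) : k i ≠ k j := by
  intro hkk
  have hri : r i (k j) ≠ 0 := hkk ▸ hk1 i
  have hrj : r j (k j) ≠ 0 := hk1 j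
  have hab : (r i (k j)).natDegree ≤ (r j (k j)).natDegree := by
    have h1 := height_mono hr (le_of_lt hij)
    rw [hk2 i, hk2 j, hkk] at h1
    have h2 : n * (r i (k j)).natDegree + (k j).val
        ≤ n * (r j (k j)).natDegree + (k j).val := by exact_mod_cast h1
    exact Nat.le_of_mul_le_mul_left (Nat.le_of_add_le_add_right h2) hn
  set a := (r i (k j)).natDegree with ha
  set b := (r j (k j)).natDegree with hb
  set c : ℂ := (r j (k j)).leadingCoeff / (r i (k j)).leadingCoeff with hc
  have hc0 : c ≠ 0 := div_ne_zero (leadingCoeff_ne_zero.mpr hrj) (leadingCoeff_ne_zero.mpr hri)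
  set m := b - a with hm
  have hma : m + a = b := Nat.sub_add_cancel hab
  set S : ℂ[X] := C c * X ^ m with hS
  have hS0 : S ≠ 0 := mul_ne_zero (C_ne_zero.mpr hc0) (pow_ne_zero _ X_ne_zero)
  have hSdeg : S.natDegree = m := natDegree_C_mul_X_pow m c hc0
  have hSlc : S.leadingCoeff = c := leadingCoeff_C_mul_X_pow c m
  set q : Fin n → ℂ[X] := r j - S • r i with hq
  have hqk : ∀ k' : Fin n, q k' = r j k' - S * r i k' := fun k' => rfl
  have hqSol : q ∈ Sol n N z α := sol_sub_smul (hr j).1 (hr i).1 S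
  have hqPrev : q ∉ prevSet n r j := by
    intro hmem
    have h := prevSet_add_smul hij hmem S
    rw [hq, sub_add_cancel] at h
    exact (hr j).2.1 h
  have strict : ∀ (jj : Fin n) (k' : Fin n), r jj k' ≠ 0 → k' ≠ k jj →
      n * (r jj k').natDegree + k'.val < n * (r jj (k jj)).natDegree + (k jj).val := by
    intro jj k' h0 hne
    refine lt_of_le_of_ne (hk3 jj k' h0) ?_
    intro heq
    exact hne (residue_eq hn heq).1
  have hlt : height n q < height n (r j) := by
    rw [hk2 j, height, Finset.sup_lt_iff (WithBot.bot_lt_coe _)]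
    intro k' _
    by_cases hq0 : q k' = 0
    · rw [if_pos hq0]; exact WithBot.bot_lt_coe _
    rw [if_neg hq0]
    suffices h : n * (q k').natDegree + k'.val < n * (r j (k j)).natDegree + (k j).val by
      exact_mod_cast h
    by_cases hkk' : k' = k j
    · subst hkk'
      have hdQ : (S * r i (k j)).natDegree = b := by
        rw [natDegree_mul hS0 hri, hSdeg, ← ha, hma]
      have hlcQ : (S * r i (k j)).leadingCoeff = (r j (k j)).leadingCoeff := by
        rw [leadingCoeff_mul, hSlc, hc, div_mul_cancel₀ _ (leadingCoeff_ne_zero.mpr hri)]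
      have hdeq : (r j (k j)).degree = (S * r i (k j)).degree := by
        rw [degree_eq_natDegree hrj, degree_eq_natDegree (mul_ne_zero hS0 hri), hdQ, ← hb]
      have hsub : (r j (k j) - S * r i (k j)).degree < (r j (k j)).degree :=
        degree_sub_lt hdeq hrj hlcQ.symm
      have hnd : (q (k j)).natDegree < b := by
        rw [natDegree_lt_iff_degree_lt hq0, hqk (k j)]
        rw [degree_eq_natDegree hrj, ← hb] at hsub
        exact hsub
      exact Nat.add_lt_add_right (mul_lt_mul_of_pos_left hnd hn) _
    · have h2 : r j k' ≠ 0 →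
          n * (r j k').natDegree + k'.val < n * b + (k j).val := fun h0 => strict j k' h0 hkk'
      have h3 : r i k' ≠ 0 →
          n * (m + (r i k').natDegree) + k'.val < n * b + (k j).val := by
        intro h0
        have hs := strict i k' h0 (by rw [hkk]; exact hkk')
        rw [hkk] at hs
        calc n * (m + (r i k').natDegree) + k'.val
            = n * m + (n * (r i k').natDegree + k'.val) := by ring
          _ < n * m + (n * a + (k j).val) := Nat.add_lt_add_left hs _
          _ = n * (m + a) + (k j).val := by ring
          _ = n * b + (k j).val := by rw [hma]
      rcases eq_or_ne (r j k') 0 with h4 | h4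
      · have h5 : r i k' ≠ 0 := by
          intro h5; apply hq0; rw [hqk, h4, h5, mul_zero, sub_zero]
        have hnd : (q k').natDegree = m + (r i k').natDegree := by
          rw [hqk, h4, zero_sub, natDegree_neg, natDegree_mul hS0 h5, hSdeg]
        rw [hnd]; exact h3 h5
      rcases eq_or_ne (r i k') 0 with h5 | h5
      · have hnd : (q k').natDegree = (r j k').natDegree := by
          rw [hqk, h5, mul_zero, sub_zero]
        rw [hnd]; exact h2 h4
      · have hle : (q k').natDegree ≤ max (r j k').natDegree (S * r i k').natDegree := by
          rw [hqk]; exact natDegree_sub_le _ _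
        have hSd : (S * r i k').natDegree = m + (r i k').natDegree := by
          rw [natDegree_mul hS0 h5, hSdeg]
        rcases le_max_iff.mp hle with h6 | h6
        · exact lt_of_le_of_lt (Nat.add_le_add_right (Nat.mul_le_mul_left n h6) _) (h2 h4)
        · rw [hSd] at h6
          exact lt_of_le_of_lt (Nat.add_le_add_right (Nat.mul_le_mul_left n h6) _) (h3 h5)
  exact absurd ((hr j).2.2 q hqSol hqPrev) (not_le.mpr hlt)


lemma det_ne_zero (hn : 0 < n) (hr : IsGenerators n N z α r) :
    (Matrix.of (fun j i => r j i) : Matrix (Fin n) (Fin n) ℂ[X]).det ≠ 0 := by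
  classical
  intro hdet
  obtain ⟨v, hv0, hv⟩ := Matrix.exists_vecMul_eq_zero_iff.mpr hdet
  choose k hk1 hk2 hk3 using fun j => height_spec hn (gen_ne_zero hr j)
  have kinj : Function.Injective k := by
    intro i j hkij
    by_contra hne
    rcases lt_or_gt_of_ne hne with h | h
    · exact lead_ne hn hr k hk1 hk2 hk3 h hkij
    · exact lead_ne hn hr k hk1 hk2 hk3 h hkij.symm
  obtain ⟨j0, hj00⟩ : ∃ j, v j ≠ 0 := Function.ne_iff.mp hv0
  set T : Finset (Fin n) := Finset.univ.filter (fun j => v j ≠ 0) with hT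
  have hTne : T.Nonempty := ⟨j0, Finset.mem_filter.mpr ⟨Finset.mem_univ _, hj00⟩⟩
  set F : Fin n → ℕ :=
    fun j => n * ((v j).natDegree + (r j (k j)).natDegree) + (k j).val with hF
  obtain ⟨m0, hm0T, hm0⟩ := Finset.exists_max_image T F hTne
  have hvm0 : v m0 ≠ 0 := (Finset.mem_filter.mp hm0T).2
  set d := (v m0).natDegree + (r m0 (k m0)).natDegree with hd
  have hcol : ∑ jj : Fin n, v jj * r jj (k m0) = 0 := by
    have h := congrFun hv (k m0)
    simpa [Matrix.vecMul, dotProduct] using h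
  have hco : (∑ jj : Fin n, v jj * r jj (k m0)).coeff d = 0 := by rw [hcol]; simp
  rw [finset_sum_coeff, Finset.sum_eq_single m0] at hco
  · rw [hd, coeff_mul_degree_add_degree] at hco
    exact mul_ne_zero (leadingCoeff_ne_zero.mpr hvm0) (leadingCoeff_ne_zero.mpr (hk1 m0)) hco
  · intro jj _ hjj
    by_cases h1 : v jj = 0
    · rw [h1, zero_mul, coeff_zero]
    by_cases h2 : r jj (k m0) = 0
    · rw [h2, mul_zero, coeff_zero]
    apply coeff_eq_zero_of_natDegree_lt
    rw [natDegree_mul h1 h2]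
    have hFlt : F jj < F m0 := by
      refine lt_of_le_of_ne (hm0 jj (Finset.mem_filter.mpr ⟨Finset.mem_univ _, h1⟩)) ?_
      intro hEq
      exact hjj (kinj (residue_eq hn hEq).1)
    have step : n * ((v jj).natDegree + (r jj (k m0)).natDegree) + (k m0).val ≤ F jj := by
      have h3 := hk3 jj (k m0) h2
      calc n * ((v jj).natDegree + (r jj (k m0)).natDegree) + (k m0).val
          = n * (v jj).natDegree + (n * (r jj (k m0)).natDegree + (k m0).val) := by ring
        _ ≤ n * (v jj).natDegree + (n * (r jj (k jj)).natDegree + (k jj).val) :=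
            Nat.add_le_add_left h3 _
        _ = F jj := by rw [hF]; ring
    have h4 : n * ((v jj).natDegree + (r jj (k m0)).natDegree) + (k m0).val
        < n * d + (k m0).val := by
      refine lt_of_le_of_lt step ?_
      have : F m0 = n * d + (k m0).val := by rw [hF, hd]
      rw [← this]; exact hFlt
    have h7 : n * ((v jj).natDegree + (r jj (k m0)).natDegree) < n * d :=
      Nat.lt_of_add_lt_add_right h4
    exact lt_of_mul_lt_mul_left h7 (Nat.zero_le n)
  · intro h; exact absurd (Finset.mem_univ m0) h

end aux

/-- For `n > 1`, the set of points `w ∈ ℂ` at which the evaluated generators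
`r_1(w), ..., r_n(w) ∈ ℂ^n` are linearly independent is infinite. -/
theorem stmt_16 (n N : ℕ) (hn : 1 < n) (hN : 1 ≤ N)
    (z : Fin N → ℂ) (α : Fin N → Fin n → ℂ)
    (hα : ∀ j : Fin N, 0 < ∑ k : Fin n, ‖α j k‖)
    (r : Fin n → (Fin n → ℂ[X])) (hr : IsGenerators n N z α r) :
    {w : ℂ | LinearIndependent ℂ
      (fun j : Fin n => fun i : Fin n => (r j i).eval w)}.Infinite := by
  classical
  have hn0 : 0 < n := lt_trans Nat.zero_lt_one hn
  set M : Matrix (Fin n) (Fin n) ℂ[X] := Matrix.of (fun j i => r j i) with hM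
  have hdet : M.det ≠ 0 := det_ne_zero hn0 hr
  have hfin : {w : ℂ | M.det.IsRoot w}.Finite := Polynomial.finite_setOf_isRoot hdet
  refine Set.Infinite.mono ?_ hfin.infinite_compl
  intro w hw
  simp only [Set.mem_compl_iff, Set.mem_setOf_eq] at hw
  simp only [Set.mem_setOf_eq]
  rw [Fintype.linearIndependent_iff]
  intro g hg
  by_contra hgne
  push_neg at hgne
  obtain ⟨i0, hi0⟩ := hgne
  have hg0 : g ≠ 0 := fun h => hi0 (congrFun h i0)
  have hdetw : (M.map (eval w)).det = 0 := by
    apply Matrix.exists_vecMul_eq_zero_iff.mp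
    refine ⟨g, hg0, ?_⟩
    funext i
    have h := congrFun hg i
    simp only [Finset.sum_apply, Pi.smul_apply, smul_eq_mul, Pi.zero_apply] at h
    simpa [Matrix.vecMul, dotProduct, Matrix.map_apply, hM, Matrix.of_apply] using h
  apply hw
  show M.det.eval w = 0
  have h2 : (evalRingHom w) M.det = (M.map (evalRingHom w)).det := RingHom.map_det _ _
  simpa [coe_evalRingHom, hdetw] using h2
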